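/- Let F be a field of characteristic 2, with θ_0, θ_3, θ*_0, θ*_3, a_0, a_3, a*_0 ∈ F satisfying θ_0 ≠ θ_3, θ*_0 ≠ θ*_3, a_0 ∉ {θ_0, θ_3}, a_3 ∉ {θ_0, θ_3}, a*_0 ≠ θ*_0, and the compatibility relation (a_3 − θ_0)/(a_0 − θ_0) = (a*_0 − θ*_3)/(a*_0 − θ*_0). For ζ ∈ F define the sequence p̃(ζ) as in Section 9 of the paper: θ̃_i(ζ), θ̃*_i(ζ) as in the type-IV construction, and φ̃_1(ζ) = ζ, φ̃_2(ζ) = (θ*_0 − θ*_3 + ζ/(a_0 − θ_0))(θ_0 − θ_3 + ζ/(a*_0 − θ*_0)), φ̃_3(ζ) = ((a_3 − θ_3)/(a_0 − θ_0))ζ, ϕ̃_1(ζ) = ((a_0 − θ_3)/(a_0 − θ_0))ζ, ϕ̃_2(ζ) = φ̃_2(ζ), ϕ̃_3(ζ) = ((a_3 − θ_0)/(a_0 − θ_0))ζ. Then for 1 ≤ i ≤ 3, φ̃_i(ζ) = ϕ̃_1(ζ)·ϑ_i + (θ̃*_i(ζ) − θ̃*_0(ζ))(θ̃_{i−1}(ζ)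 − θ̃_3(ζ)) and ϕ̃_i(ζ) = φ̃_1(ζ)·ϑ_i + (θ̃*_i(ζ) − θ̃*_0(ζ))(θ̃_{4−i}(ζ) − θ̃_0(ζ)), where (ϑ_1, ϑ_2, ϑ_3) = (1, 0, 1). -/

import Mathlib

theorem stmt15 (F : Type*) [Field F] (hchar : (2 : F) = 0)
    (θ0 θ3 θs0 θs3 a0 a3 as0 : F)
    (h1 : θ0 ≠ θ3) (h2 : θs0 ≠ θs3)
    (h3 : a0 ≠ θ0) (h4 : a0 ≠ θ3) (h5 : a3 ≠ θ0) (h6 : a3 ≠ θ3)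
    (h7 : as0 ≠ θs0)
    (hcompat : (a3 - θ0) / (a0 - θ0) = (as0 - θs3) / (as0 - θs0))
    (ζ : F)
    (θt θts φt ψt vt : ℕ → F)
    (ht0 : θt 0 = θ0) (ht1 : θt 1 = θ0 + ζ / (as0 - θs0))
    (ht2 : θt 2 = θ3 + ζ / (as0 - θs0)) (ht3 : θt 3 = θ3)
    (hs0 : θts 0 = θs0) (hs1 : θts 1 = θs0 + ζ / (a0 - θ0))
    (hs2 : θts 2 = θs3 + ζ / (a0 - θ0)) (hs3 : θts 3 = θs3)
    (hφ1 : φt 1 = ζ)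
    (hφ2 : φt 2 = (θs0 - θs3 + ζ / (a0 - θ0)) * (θ0 - θ3 + ζ / (as0 - θs0)))
    (hφ3 : φt 3 = ((a3 - θ3) / (a0 - θ0)) * ζ)
    (hψ1 : ψt 1 = ((a0 - θ3) / (a0 - θ0)) * ζ)
    (hψ2 : ψt 2 = (θs0 - θs3 + ζ / (a0 - θ0)) * (θ0 - θ3 + ζ / (as0 - θs0)))
    (hψ3 : ψt 3 = ((a3 - θ0) / (a0 - θ0)) * ζ)
    (hv1 : vt 1 = 1) (hv2 : vt 2 = 0) (hv3 : vt 3 = 1) :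
    ∀ i : ℕ, 1 ≤ i → i ≤ 3 →
      φt i = ψt 1 * vt i + (θts i - θts 0) * (θt (i - 1) - θt 3) ∧
      ψt i = φt 1 * vt i + (θts i - θts 0) * (θt (4 - i) - θt 0) := by

  have hA : a0 - θ0 ≠ 0 := sub_ne_zero.mpr h3
  have hB : as0 - θs0 ≠ 0 := sub_ne_zero.mpr h7
  have key : (a3 - θ0) * (as0 - θs0) = (as0 - θs3) * (a0 - θ0) := by
    field_simp at hcompat; linear_combination hcompat
  intro i hi1 hi3
  interval_cases i
  · constructor
    · rw [hφ1, hψ1, hv1, hs1, hs0, ht0, ht3]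
      field_simp
      linear_combination (ζ * θ3 - ζ * θ0) * hchar
    · rw [hψ1, hφ1, hv1, hs1, hs0, ht3, ht0]
      field_simp
      linear_combination (ζ * θ0 - ζ * θ3) * hchar
  · constructor
    · rw [hφ2, hψ1, hv2, hs2, hs0, ht1, ht3]
      field_simp
      linear_combination (-(θs3*a0*ζ) + θs0*a0*ζ + θ3*θs3*a0*as0 - θ3*θs0*a0*as0 - θ3*θs0*θs3*a0 + θ3*θs0^2*a0 + θ0*θs3*ζ - θ0*θs3*a0*as0 - θ0*θs0*ζ + θ0*θs0*a0*as0 + θ0*θs0*θs3*a0 - θ0*θs0^2*a0 - θ0*θ3*θs3*as0 + θ0*θ3*θs0*as0 + θ0*θ3*θs0*θs3 - θ0*θ3*θs0^2 + θ0^2*θs3*as0 - θ0^2*θs0*as0 - θ0^2*θs0*θs3 + θ0^2*θs0^2) * hchar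
    · rw [hψ2, hφ1, hv2, hs2, hs0, ht2, ht0]
      field_simp
      linear_combination (-(θs3*a0*ζ) + θs0*a0*ζ - θ3*as0*ζ + θ3*θs0*ζ + θ0*as0*ζ + θ0*θs3*ζ - 2*θ0*θs0*ζ) * hchar
  · constructor
    · rw [hφ3, hψ1, hv3, hs3, hs0, ht2, ht3]
      field_simp
      linear_combination ζ*key + (ζ*(θs0-θs3)*(a0-θ0))*hchar
    · rw [hψ3, hφ1, hv3, hs3, hs0, ht1, ht0]
      field_simp
      linear_combination ζ*key + (ζ*(θs0-θs3)*(a0-θ0))*hchar
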